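/- Let n ≥ 3 and let s ∈ T_n. If ⟨s,s⟩ = −1, then s is sporadic. -/

import Mathlib

open Matrix

/-- Membership in `T_N = SOC(N) ∩ ℤ^N` (dimension `N = n+1`). -/
def memT {n : ℕ} (s : Fin (n + 1) → ℤ) : Prop :=
  0 ≤ s (Fin.last n) ∧ (∑ i : Fin n, s i.castSucc ^ 2) ≤ s (Fin.last n) ^ 2

/-- The bilinear form `⟨a,b⟩ = a₁b₁ + ⋯ + a_{N-1}b_{N-1} - a_N b_N`. -/
def socForm {n : ℕ} (a b : Fin (n + 1) → ℤ) : ℤ :=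
  (∑ i : Fin n, a i.castSucc * b i.castSucc) - a (Fin.last n) * b (Fin.last n)

/-- A point `s ∈ T_N` is sporadic if no nonzero Pythagorean tuple can be subtracted. -/
def socSporadic {n : ℕ} (s : Fin (n + 1) → ℤ) : Prop :=
  ¬ ∃ p : Fin (n + 1) → ℤ, p ≠ 0 ∧ memT p ∧ socForm p p = 0 ∧ memT (s - p)

/-- The matrix `A_N` (of Definition 5 of the paper), for dimension `N = n+1`. -/
def Amat (n : ℕ) : Matrix (Fin (n + 1)) (Fin (n + 1)) ℤ :=
  fun i j =>
    if n + 1 = 3 then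
      (if (j : ℕ) = 2 then (if (i : ℕ) = 2 then 3 else 2)
       else if (i : ℕ) = (j : ℕ) then -1 else -2)
    else
      (if (i : ℕ) < 3 ∧ (j : ℕ) < 3 then (if i = j then 0 else -1)
       else if (i : ℕ) < 3 ∧ j = Fin.last n then 1
       else if i = Fin.last n ∧ (j : ℕ) < 3 then -1
       else if i = Fin.last n ∧ j = Fin.last n then 2
       else if i = j then 1 else 0)

/-- The diagonal matrix `Q_k` flipping the sign of the `k`-th coordinate. -/
def Qmat {n : ℕ} (k : Fin n) : Matrix (Fin n) (Fin n) ℤ :=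
  Matrix.diagonal fun i => if i = k then -1 else 1

/-- `A_N⁺ = Q₁ Q₂ ⋯ Q_{N-1} A_N`, i.e. the product of `A_N` with the diagonal matrix
flipping the signs of the first `N - 1` coordinates. -/
def AmatPlus (n : ℕ) : Matrix (Fin (n + 1)) (Fin (n + 1)) ℤ :=
  (Matrix.diagonal fun i : Fin (n + 1) => if i = Fin.last n then 1 else -1) * Amat n

/-- An integer vector is primitive if the gcd of its coordinates is `1`. -/
def primitiveVec {n : ℕ} (s : Fin n → ℤ) : Prop :=
  Finset.univ.gcd s = 1


/-- If `s ∈ T_N` (`N = n+1 ≥ 3`) satisfies `⟨s,s⟩ = -1`, then `s` is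
sporadic. -/
theorem sporadic_of_socForm_eq_neg_one
    (n : ℕ) (h3 : 2 ≤ n) (s : Fin (n + 1) → ℤ)
    (hs : memT s) (hform : socForm s s = -1) :
    socSporadic s := by
  rintro ⟨p, hp0, ⟨hpN, hpa⟩, hpp, hqN, hqb⟩
  set q : Fin (n + 1) → ℤ := s - p with hq
  have hsq : s = p + q := by simp [hq]
  set pN := p (Fin.last n) with hpNdef
  set qN := q (Fin.last n) with hqNdef
  set a := ∑ i : Fin n, p i.castSucc ^ 2 with hadef
  set b := ∑ i : Fin n, q i.castSucc ^ 2 with hbdef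
  set c := ∑ i : Fin n, p i.castSucc * q i.castSucc with hcdef
  have hcs : c ^ 2 ≤ a * b := Finset.sum_mul_sq_le_sq_mul_sq _ _ _
  -- a = pN^2
  have ha : a = pN ^ 2 := by
    have := hpp
    simp only [socForm, sub_eq_zero] at this
    simpa [hadef, sq] using this
  -- expansion of the quadratic form at s = p + q
  have hsum : ∑ i : Fin n, s i.castSucc * s i.castSucc = a + 2 * c + b := by
    rw [hadef, hbdef, hcdef, Finset.mul_sum, ← Finset.sum_add_distrib,
      ← Finset.sum_add_distrib]
    refine Finset.sum_congr rfl fun i _ => ?_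
    have h : s i.castSucc = p i.castSucc + q i.castSucc := by rw [hsq]; simp
    rw [h]; ring
  have hN : s (Fin.last n) = pN + qN := by rw [hsq]; simp; rfl
  have hexp : a - pN ^ 2 + 2 * (c - pN * qN) + (b - qN ^ 2) = -1 := by
    have := hform
    simp only [socForm] at this
    rw [hsum, hN] at this
    linear_combination this
  -- c ≤ pN * qN
  have hcs' : c ^ 2 ≤ pN ^ 2 * qN ^ 2 := by
    calc c ^ 2 ≤ a * b := hcs
    _ ≤ pN ^ 2 * qN ^ 2 := by rw [ha]; exact mul_le_mul_of_nonneg_left hqb (sq_nonneg _)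
  have hu : c - pN * qN ≤ 0 := by nlinarith [mul_nonneg hpN hqN]
  have hv : b - qN ^ 2 ≤ 0 := by linarith
  have hu0 : c - pN * qN = 0 ∧ b - qN ^ 2 = -1 := by
    rw [ha] at hexp; omega
  have hc' : c = pN * qN := by linarith [hu0.1]
  have hb' : b = qN ^ 2 - 1 := by linarith [hu0.2]
  have hkey : pN ^ 2 * qN ^ 2 ≤ pN ^ 2 * (qN ^ 2 - 1) := by
    calc pN ^ 2 * qN ^ 2 = c ^ 2 := by rw [hc']; ring
    _ ≤ a * b := hcs
    _ = pN ^ 2 * (qN ^ 2 - 1) := by rw [ha, hb']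
  have hsq0 : pN ^ 2 ≤ 0 := by nlinarith
  have hpN0 : pN = 0 := by nlinarith [sq_nonneg pN]
  have ha0 : a = 0 := by rw [ha, hpN0]; ring
  have hpi : ∀ i : Fin n, p i.castSucc = 0 := by
    intro i
    have := (Finset.sum_eq_zero_iff_of_nonneg (fun i _ => sq_nonneg (p i.castSucc))).mp ha0 i
      (Finset.mem_univ i)
    exact pow_eq_zero_iff (by norm_num) |>.mp this
  apply hp0
  funext i
  refine Fin.lastCases ?_ ?_ i
  · exact hpN0
  · intro j; exact hpi j
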